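/- Let g : ℝⁿ → ℝ ∪ {∞} and h : ℝⁿ → ℝ ∪ {∞} be proper convex functions. If x̄ is an optimal solution of the DC program min_{x ∈ dom g} [g(x) − h(x)], then every y ∈ ∂h(x̄) is an optimal solution of the Toland–Singer dual problem min_{y ∈ dom h*} [h*(y) − g*(y)]. -/
import Mathlib

open Matrix Set

def ConvexERealFn {n : ℕ} (f : (Fin n → ℝ) → EReal) : Prop :=
  ∀ x y : Fin n → ℝ, ∀ a b : ℝ, 0 ≤ a → 0 ≤ b → a + b = 1 →
    f (a • x + b • y) ≤ (a : EReal) * f x + (b : EReal) * f y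

noncomputable def conjFn {n : ℕ} (f : (Fin n → ℝ) → EReal) (y : Fin n → ℝ) : EReal :=
  ⨆ x : Fin n → ℝ, (((y ⬝ᵥ x : ℝ) : EReal) - f x)

/-- Subdifferential of an extended-real-valued function, empty outside the domain. -/
def subdiffFn {n : ℕ} (f : (Fin n → ℝ) → EReal) (xb : Fin n → ℝ) : Set (Fin n → ℝ) :=
  {y | f xb ≠ ⊤ ∧ ∀ x, f xb + ((y ⬝ᵥ (x - xb) : ℝ) : EReal) ≤ f x}

lemma conj_ge {n : ℕ} (f : (Fin n → ℝ) → EReal) (z x : Fin n → ℝ) :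
    ((z ⬝ᵥ x : ℝ) : EReal) - f x ≤ conjFn f z :=
  le_iSup (fun x => ((z ⬝ᵥ x : ℝ) : EReal) - f x) x

/-- Toland–Singer duality (i): if `x̄` solves the DC program `min_{x ∈ dom g} [g − h]`,
then every `y ∈ ∂h(x̄)` solves the dual `min_{y ∈ dom h*} [h* − g*]`. -/
theorem stmt6 {n : ℕ} (g h : (Fin n → ℝ) → EReal)
    (hg : ConvexERealFn g) (hh : ConvexERealFn h)
    (hgbot : ∀ x, g x ≠ ⊥) (hhbot : ∀ x, h x ≠ ⊥)
    (hgproper : ∃ x, g x ≠ ⊤) (hhproper : ∃ x, h x ≠ ⊤)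
    (xb : Fin n → ℝ)
    (hopt : g xb ≠ ⊤ ∧ ∀ x, g x ≠ ⊤ → g xb - h xb ≤ g x - h x)
    (y : Fin n → ℝ) (hy : y ∈ subdiffFn h xb) :
    conjFn h y ≠ ⊤ ∧
      ∀ z, conjFn h z ≠ ⊤ → conjFn h y - conjFn g y ≤ conjFn h z - conjFn g z := by
  obtain ⟨hhxbtop, hsub⟩ := hy
  -- h xb is a real number a
  set a : ℝ := (h xb).toReal with ha_def
  have ha : h xb = (a : EReal) := (EReal.coe_toReal hhxbtop (hhbot xb)).symm
  -- g xb is a real number c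
  have hgxbtop := hopt.1
  set c : ℝ := (g xb).toReal with hc_def
  have hc : g xb = (c : EReal) := (EReal.coe_toReal hgxbtop (hgbot xb)).symm
  -- h*(y) = ⟨y, xb⟩ - a
  have hstar_y : conjFn h y = ((y ⬝ᵥ xb - a : ℝ) : EReal) := by
    apply le_antisymm
    · apply iSup_le
      intro x
      have h1 := hsub x
      rw [ha, dotProduct_sub] at h1
      have h2 : ((a + (y ⬝ᵥ x - y ⬝ᵥ xb) : ℝ) : EReal) ≤ h x := by
        rw [EReal.coe_add]; exact h1
      calc ((y ⬝ᵥ x : ℝ) : EReal) - h x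
          ≤ ((y ⬝ᵥ x : ℝ) : EReal) - ((a + (y ⬝ᵥ x - y ⬝ᵥ xb) : ℝ) : EReal) :=
            EReal.sub_le_sub le_rfl h2
        _ = ((y ⬝ᵥ xb - a : ℝ) : EReal) := by
            norm_cast; ring
    · have := conj_ge h y xb
      rw [ha, ← EReal.coe_sub] at this
      exact this
  constructor
  · rw [hstar_y]; exact EReal.coe_ne_top _
  intro z hztop
  -- h*(z) is not ⊥ since h is proper
  obtain ⟨x0, hx0⟩ := hhproper
  have hx0r : h x0 = ((h x0).toReal : EReal) := (EReal.coe_toReal hx0 (hhbot x0)).symm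
  have hzbot : conjFn h z ≠ ⊥ := by
    intro hb
    have := conj_ge h z x0
    rw [hb, hx0r, ← EReal.coe_sub, le_bot_iff] at this
    exact EReal.coe_ne_bot _ this
  set H : ℝ := (conjFn h z).toReal with hH_def
  have hH : conjFn h z = (H : EReal) := (EReal.coe_toReal hztop hzbot).symm
  -- key bound: g*(z) ≤ H - (c - a)
  have gz_le : conjFn g z ≤ ((H - (c - a) : ℝ) : EReal) := by
    apply iSup_le
    intro x
    by_cases hgx : g x = ⊤
    · rw [hgx, EReal.sub_top]; exact bot_le
    · -- g x real
      have hgxr : g x = ((g x).toReal : EReal) := (EReal.coe_toReal hgx (hgbot x)).symm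
      set b : ℝ := (g x).toReal
      -- from optimality, h x ≠ ⊤
      have hop := hopt.2 x hgx
      have hhx : h x ≠ ⊤ := by
        intro ht
        rw [ht, EReal.sub_top, le_bot_iff, hc, ha, ← EReal.coe_sub] at hop
        exact EReal.coe_ne_bot _ hop
      have hhxr : h x = ((h x).toReal : EReal) := (EReal.coe_toReal hhx (hhbot x)).symm
      set d : ℝ := (h x).toReal
      -- optimality in ℝ
      have hopR : c - a ≤ b - d := by
        rw [hc, ha, hgxr, hhxr, ← EReal.coe_sub, ← EReal.coe_sub] at hop
        exact_mod_cast hop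
      -- H ≥ ⟨z,x⟩ - d
      have hHx : z ⬝ᵥ x - d ≤ H := by
        have := conj_ge h z x
        rw [hhxr, ← EReal.coe_sub, hH] at this
        exact_mod_cast this
      rw [hgxr, ← EReal.coe_sub, EReal.coe_le_coe_iff]
      linarith
  -- g*(z) is not ⊥ (g proper) hence real
  obtain ⟨x1, hx1⟩ := hgproper
  have hx1r : g x1 = ((g x1).toReal : EReal) := (EReal.coe_toReal hx1 (hgbot x1)).symm
  have gzbot : conjFn g z ≠ ⊥ := by
    intro hb
    have := conj_ge g z x1
    rw [hb, hx1r, ← EReal.coe_sub, le_bot_iff] at this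
    exact EReal.coe_ne_bot _ this
  have gztop : conjFn g z ≠ ⊤ := by
    intro ht
    rw [ht, top_le_iff] at gz_le
    exact EReal.coe_ne_top _ gz_le
  set Gz : ℝ := (conjFn g z).toReal with hGz_def
  have hGz : conjFn g z = (Gz : EReal) := (EReal.coe_toReal gztop gzbot).symm
  have hGzR : Gz ≤ H - (c - a) := by
    rw [hGz] at gz_le; exact_mod_cast gz_le
  -- RHS ≥ c - a
  have rhs_ge : ((c - a : ℝ) : EReal) ≤ conjFn h z - conjFn g z := by
    rw [hH, hGz, ← EReal.coe_sub, EReal.coe_le_coe_iff]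
    linarith
  -- LHS ≤ c - a
  by_cases gytop : conjFn g y = ⊤
  · rw [gytop, EReal.sub_top]; exact bot_le
  have gy_ge : ((y ⬝ᵥ xb - c : ℝ) : EReal) ≤ conjFn g y := by
    have := conj_ge g y xb
    rw [hc, ← EReal.coe_sub] at this
    exact this
  have gybot : conjFn g y ≠ ⊥ := fun hb => by
    rw [hb, le_bot_iff] at gy_ge; exact EReal.coe_ne_bot _ gy_ge
  set Gy : ℝ := (conjFn g y).toReal with hGy_def
  have hGy : conjFn g y = (Gy : EReal) := (EReal.coe_toReal gytop gybot).symm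
  have hGyR : y ⬝ᵥ xb - c ≤ Gy := by rw [hGy] at gy_ge; exact_mod_cast gy_ge
  have lhs_le : conjFn h y - conjFn g y ≤ ((c - a : ℝ) : EReal) := by
    rw [hstar_y, hGy, ← EReal.coe_sub, EReal.coe_le_coe_iff]
    linarith
  exact lhs_le.trans rhs_ge
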